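/- The 2-rank of the compact symplectic group Sp(n) (the group of n×n quaternionic unitary matrices) equals n. -/

import Mathlib

open Matrix Finset

noncomputable section

namespace TwoRankSp

local notation "ℍ" => Quaternion ℝ

/-! ### Real trace of quaternionic matrices -/

/-- The real part of the trace. -/
def rtr {n : ℕ} (P : Matrix (Fin n) (Fin n) ℍ) : ℝ := ∑ i, (P i i).re

/-- `re` as an additive monoid hom. -/
def reHom : ℍ →+ ℝ where
  toFun := QuaternionAlgebra.re
  map_zero' := rfl
  map_add' := by intro a b; simp

lemma star_real_smul (c : ℝ) (x : ℍ) : star (c • x) = c • star x := by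
  ext <;> simp

lemma star_real_smul_matrix {n : ℕ} (c : ℝ) (M : Matrix (Fin n) (Fin n) ℍ) :
    star (c • M) = c • star M :=
  Matrix.ext fun a b => by
    rw [Matrix.star_apply, Matrix.smul_apply, Matrix.smul_apply, Matrix.star_apply,
      star_real_smul]

lemma rtr_sum {n : ℕ} {ι : Type*} (s : Finset ι) (M : ι → Matrix (Fin n) (Fin n) ℍ) :
    rtr (∑ x ∈ s, M x) = ∑ x ∈ s, rtr (M x) := by
  unfold rtr
  rw [Finset.sum_comm]
  refine Finset.sum_congr rfl fun i _ => ?_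
  rw [Matrix.sum_apply]
  exact map_sum reHom _ s

lemma rtr_sub {n : ℕ} (A B : Matrix (Fin n) (Fin n) ℍ) :
    rtr (A - B) = rtr A - rtr B := by
  unfold rtr
  rw [← Finset.sum_sub_distrib]
  refine Finset.sum_congr rfl fun i _ => ?_
  rw [Matrix.sub_apply]
  simp [Quaternion.re_sub]

lemma rtr_one {n : ℕ} : rtr (1 : Matrix (Fin n) (Fin n) ℍ) = n := by
  unfold rtr
  simp [Matrix.one_apply, Quaternion.re_one]

lemma rtr_smul {n : ℕ} (c : ℝ) (M : Matrix (Fin n) (Fin n) ℍ) :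
    rtr (c • M) = c * rtr M := by
  unfold rtr
  rw [Finset.mul_sum]
  refine Finset.sum_congr rfl fun i _ => ?_
  simp [Matrix.smul_apply, Quaternion.re_smul, smul_eq_mul]

/-- The diagonal entries of a self-adjoint idempotent matrix over the quaternions. -/
lemma diag_re_eq {n : ℕ} {P : Matrix (Fin n) (Fin n) ℍ}
    (hsa : star P = P) (hid : P * P = P) (i : Fin n) :
    (P i i).re = ∑ j, Quaternion.normSq (P i j) := by
  have hstar : ∀ a b, star (P a b) = P b a := by
    intro a b
    have := congrFun (congrFun hsa b) a
    simpa [Matrix.star_apply] using this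
  have h1 : P i i = ∑ j, P i j * star (P i j) := by
    conv_lhs => rw [← hid]
    rw [Matrix.mul_apply]
    refine Finset.sum_congr rfl fun j _ => ?_
    rw [← hstar i j]
  rw [h1]
  rw [show (∑ j, P i j * star (P i j)).re = ∑ j, (P i j * star (P i j)).re from
    map_sum reHom _ _]
  refine Finset.sum_congr rfl fun j _ => ?_
  rw [Quaternion.self_mul_star, Quaternion.re_coe]

lemma diag_re_nonneg {n : ℕ} {P : Matrix (Fin n) (Fin n) ℍ}
    (hsa : star P = P) (hid : P * P = P) (i : Fin n) :
    0 ≤ (P i i).re := by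
  rw [diag_re_eq hsa hid i]
  exact Finset.sum_nonneg fun j _ => Quaternion.normSq_nonneg

lemma rtr_nonneg {n : ℕ} {P : Matrix (Fin n) (Fin n) ℍ}
    (hsa : star P = P) (hid : P * P = P) : 0 ≤ rtr P :=
  Finset.sum_nonneg fun i _ => diag_re_nonneg hsa hid i

/-- A nonzero self-adjoint idempotent quaternionic matrix has real trace at least 1. -/
lemma one_le_rtr {n : ℕ} {P : Matrix (Fin n) (Fin n) ℍ}
    (hsa : star P = P) (hid : P * P = P) (h0 : P ≠ 0) : 1 ≤ rtr P := by
  have hstar : ∀ a b, star (P a b) = P b a := by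
    intro a b
    have := congrFun (congrFun hsa b) a
    simpa [Matrix.star_apply] using this
  -- find a nonzero column
  have hex : ∃ i j, P i j ≠ 0 := by
    by_contra h
    push_neg at h
    refine h0 (Matrix.ext fun i j => ?_)
    rw [h i j, Matrix.zero_apply]
  obtain ⟨i₀, j₀, hij⟩ := hex
  set w : Fin n → ℍ := fun i => P i j₀ with hw
  have hPw : ∀ i, ∑ k, P i k * w k = w i := by
    intro i
    have := congrFun (congrFun hid i) j₀
    simpa [Matrix.mul_apply, hw] using this
  have hwP : ∀ k, ∑ m, star (w m) * P m k = star (w k) := by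
    intro k
    apply star_injective
    rw [_root_.star_sum, star_star]
    calc ∑ m, star (star (w m) * P m k) = ∑ m, P k m * w m := by
          refine Finset.sum_congr rfl fun m _ => ?_
          rw [StarMul.star_mul, star_star, hstar]
      _ = w k := hPw k
  set c : ℝ := ∑ m, Quaternion.normSq (w m) with hc
  have hw0 : w i₀ ≠ 0 := hij
  have hcpos : 0 < c := by
    refine Finset.sum_pos' (fun m _ => Quaternion.normSq_nonneg) ⟨i₀, Finset.mem_univ _, ?_⟩
    exact lt_of_le_of_ne Quaternion.normSq_nonneg
      (Ne.symm (Quaternion.normSq_ne_zero.2 hw0))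
  set Q₀ : Matrix (Fin n) (Fin n) ℍ := Matrix.of (fun a b => w a * star (w b)) with hQ
  have hQsa : star Q₀ = Q₀ := by
    refine Matrix.ext fun a b => ?_
    simp only [Matrix.star_apply, hQ, Matrix.of_apply, StarMul.star_mul, star_star]
  have hPQ : P * Q₀ = Q₀ := by
    refine Matrix.ext fun a b => ?_
    rw [Matrix.mul_apply]
    show ∑ m, P a m * (w m * star (w b)) = w a * star (w b)
    calc ∑ m, P a m * (w m * star (w b)) = (∑ m, P a m * w m) * star (w b) := by
          rw [Finset.sum_mul]
          exact Finset.sum_congr rfl fun m _ => (mul_assoc _ _ _).symm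
      _ = w a * star (w b) := by rw [hPw]
  have hQP : Q₀ * P = Q₀ := by
    refine Matrix.ext fun a b => ?_
    rw [Matrix.mul_apply]
    show ∑ m, (w a * star (w m)) * P m b = w a * star (w b)
    calc ∑ m, (w a * star (w m)) * P m b = w a * ∑ m, star (w m) * P m b := by
          rw [Finset.mul_sum]
          exact Finset.sum_congr rfl fun m _ => (mul_assoc _ _ _)
      _ = w a * star (w b) := by rw [hwP]
  have hQQ : Q₀ * Q₀ = c • Q₀ := by
    refine Matrix.ext fun a b => ?_
    rw [Matrix.mul_apply, Matrix.smul_apply]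
    show ∑ m, (w a * star (w m)) * (w m * star (w b)) = c • (w a * star (w b))
    have key : ∀ m, (w a * star (w m)) * (w m * star (w b))
        = Quaternion.normSq (w m) • (w a * star (w b)) := by
      intro m
      calc (w a * star (w m)) * (w m * star (w b))
          = w a * ((star (w m) * w m) * star (w b)) := by
            rw [mul_assoc, ← mul_assoc (star (w m))]
        _ = w a * (((Quaternion.normSq (w m) : ℝ) : ℍ) * star (w b)) := by
            rw [Quaternion.star_mul_self]
        _ = (((Quaternion.normSq (w m) : ℝ) : ℍ)) * (w a * star (w b)) := by
            rw [← mul_assoc, ← Quaternion.coe_commutes, mul_assoc]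
        _ = Quaternion.normSq (w m) • (w a * star (w b)) := by
            rw [Quaternion.coe_mul_eq_smul]
    calc ∑ m, (w a * star (w m)) * (w m * star (w b))
        = ∑ m, Quaternion.normSq (w m) • (w a * star (w b)) :=
          Finset.sum_congr rfl fun m _ => key m
      _ = c • (w a * star (w b)) := by rw [← Finset.sum_smul]
  have hrtrQ : rtr Q₀ = c := by
    unfold rtr
    rw [hc]
    refine Finset.sum_congr rfl fun i _ => ?_
    show (w i * star (w i)).re = _
    rw [Quaternion.self_mul_star, Quaternion.re_coe]
  set R : Matrix (Fin n) (Fin n) ℍ := P - c⁻¹ • Q₀ with hR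
  have hRsa : star R = R := by
    rw [hR, star_sub, hsa, star_real_smul_matrix, hQsa]
  have hcinv : c⁻¹ * c = 1 := inv_mul_cancel₀ hcpos.ne'
  have hRid : R * R = R := by
    rw [hR, sub_mul, mul_sub, mul_sub, hid, Matrix.mul_smul, hPQ, Matrix.smul_mul, hQP,
      Matrix.smul_mul, Matrix.mul_smul, hQQ, smul_smul, smul_smul]
    rw [mul_assoc, hcinv, mul_one]
    abel
  have hnn := rtr_nonneg hRsa hRid
  rw [hR, rtr_sub, rtr_smul, hrtrQ, hcinv, sub_nonneg] at hnn
  exact hnn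

/-- Counting self-adjoint idempotents summing to 1. -/
lemma card_nonzero_le {n : ℕ} {ι : Type*} [Fintype ι]
    (P : ι → Matrix (Fin n) (Fin n) ℍ)
    (hsa : ∀ x, star (P x) = P x) (hid : ∀ x, P x * P x = P x)
    (hsum : ∑ x, P x = 1) (s : Finset ι) (hs : ∀ x ∈ s, P x ≠ 0) :
    s.card ≤ n := by
  have h1 : (s.card : ℝ) ≤ ∑ x ∈ s, rtr (P x) := by
    have := Finset.card_nsmul_le_sum s (fun x => rtr (P x)) 1
      (fun x hx => one_le_rtr (hsa x) (hid x) (hs x hx))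
    simpa [nsmul_eq_mul] using this
  have h2 : ∑ x ∈ s, rtr (P x) ≤ ∑ x : ι, rtr (P x) :=
    Finset.sum_le_sum_of_subset_of_nonneg (Finset.subset_univ s)
      (fun x _ _ => rtr_nonneg (hsa x) (hid x))
  have h3 : ∑ x : ι, rtr (P x) = n := by
    rw [← rtr_sum, hsum, rtr_one]
  have : (s.card : ℝ) ≤ (n : ℝ) := by
    calc (s.card : ℝ) ≤ _ := h1
      _ ≤ _ := h2
      _ = _ := h3
  exact_mod_cast this

/-! ### Signs -/

lemma neg_one_pow_mod_two {R : Type*} [Monoid R] [HasDistribNeg R] (x : ℕ) :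
    ((-1 : R)) ^ (x % 2) = (-1 : R) ^ x := by
  conv_rhs => rw [← Nat.div_add_mod x 2]
  rw [pow_add, pow_mul, neg_one_sq, one_pow, one_mul]

/-- Sign of an element of `ZMod 2`. -/
def sgn (a : ZMod 2) : ℝ := (-1 : ℝ) ^ a.val

lemma sgn_zero : sgn 0 = 1 := by simp [sgn]

lemma sgn_add (a b : ZMod 2) : sgn (a + b) = sgn a * sgn b := by
  unfold sgn
  rw [ZMod.val_add, neg_one_pow_mod_two, pow_add]

lemma sgn_mul_self (a : ZMod 2) : sgn a * sgn a = 1 := by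
  unfold sgn
  rw [← pow_add, ← two_mul, pow_mul, neg_one_sq, one_pow]

lemma sgn_one : sgn 1 = -1 := by
  unfold sgn
  norm_num [ZMod.val_one]

lemma sgn_sum {ι : Type*} (s : Finset ι) (g : ι → ZMod 2) :
    sgn (∑ i ∈ s, g i) = ∏ i ∈ s, sgn (g i) := by
  classical
  induction s using Finset.induction_on with
  | empty => simp [sgn_zero]
  | insert _ _ h ih => rw [Finset.sum_insert h, Finset.prod_insert h, sgn_add, ih]

/-- The standard pairing on `(ZMod 2)^t`. -/
def ip {t : ℕ} (w v : Fin t → ZMod 2) : ZMod 2 := ∑ i, w i * v i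

lemma ip_add {t : ℕ} (w u v : Fin t → ZMod 2) : ip w (u + v) = ip w u + ip w v := by
  unfold ip
  rw [← Finset.sum_add_distrib]
  exact Finset.sum_congr rfl fun i _ => by simp [mul_add]

/-- Character orthogonality for `(ZMod 2)^t`. -/
lemma sum_sgn_ip {t : ℕ} (v : Fin t → ZMod 2) :
    ∑ w : Fin t → ZMod 2, sgn (ip w v) = if v = 0 then ((2 : ℝ) ^ t) else 0 := by
  have hrw : ∀ w : Fin t → ZMod 2, sgn (ip w v) = ∏ i, sgn (w i * v i) := fun w =>
    sgn_sum _ _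
  rw [Finset.sum_congr rfl fun w _ => hrw w,
    ← Fintype.prod_sum (fun i (a : ZMod 2) => sgn (a * v i))]
  have huniv : (Finset.univ : Finset (ZMod 2)) = {0, 1} := by decide
  have hfac : ∀ i : Fin t, ∑ a : ZMod 2, sgn (a * v i) = 1 + sgn (v i) := by
    intro i
    rw [huniv, Finset.sum_insert (by decide), Finset.sum_singleton, zero_mul, one_mul, sgn_zero]
  rw [Finset.prod_congr rfl fun i _ => hfac i]
  by_cases hv : v = 0
  · rw [if_pos hv]
    subst hv
    simp only [Pi.zero_apply, sgn_zero]
    rw [Finset.prod_const]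
    norm_num
  · rw [if_neg hv]
    obtain ⟨i, hi⟩ : ∃ i, v i ≠ 0 := by
      by_contra h
      push_neg at h
      exact hv (funext h)
    have hone : ∀ a : ZMod 2, a ≠ 0 → a = 1 := by decide
    refine Finset.prod_eq_zero (Finset.mem_univ i) ?_
    rw [hone (v i) hi, sgn_one]
    ring

/-! ### The upper bound -/

lemma upper_bound {n t : ℕ}
    (f : (Fin t → Multiplicative (ZMod 2)) →* unitary (Matrix (Fin n) (Fin n) ℍ))
    (hf : Function.Injective f) : t ≤ n := by
  classical
  -- The commuting family of involutions
  set A : (Fin t → ZMod 2) → Matrix (Fin n) (Fin n) ℍ :=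
    fun v => (f (fun i => Multiplicative.ofAdd (v i))).1 with hA
  have hA_add : ∀ u v, A (u + v) = A u * A v := by
    intro u v
    have h : (fun i => Multiplicative.ofAdd ((u + v) i)) =
        (fun i => Multiplicative.ofAdd (u i)) * (fun i => Multiplicative.ofAdd (v i)) := by
      funext i
      simp [ofAdd_add]
    simp only [hA, h, _root_.map_mul]
    rfl
  have hA_zero : A 0 = 1 := by
    have h : (fun i => Multiplicative.ofAdd ((0 : Fin t → ZMod 2) i)) =
        (1 : Fin t → Multiplicative (ZMod 2)) := by
      funext i; rfl
    simp only [hA, h, _root_.map_one]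
    rfl
  have hself : ∀ v : Fin t → ZMod 2, v + v = 0 := by
    intro v; funext i
    have h2 : ∀ a : ZMod 2, a + a = 0 := by decide
    exact h2 (v i)
  have hA_sq : ∀ v, A v * A v = 1 := by
    intro v
    rw [← hA_add, hself, hA_zero]
  have hA_mem : ∀ v, A v ∈ unitary (Matrix (Fin n) (Fin n) ℍ) := fun v =>
    (f (fun i => Multiplicative.ofAdd (v i))).2
  have hA_star : ∀ v, star (A v) = A v := by
    intro v
    have h1 : star (A v) * A v = 1 := Unitary.star_mul_self_of_mem (hA_mem v)
    calc star (A v) = star (A v) * (A v * A v) := by rw [hA_sq, mul_one]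
      _ = (star (A v) * A v) * A v := by rw [mul_assoc]
      _ = A v := by rw [h1, one_mul]
  have hA_inj : Function.Injective A := by
    intro u v huv
    have h1 : f (fun i => Multiplicative.ofAdd (u i)) = f (fun i => Multiplicative.ofAdd (v i)) :=
      Subtype.ext huv
    have h2 := hf h1
    funext i
    exact congrArg Multiplicative.toAdd (congrFun h2 i)
  -- The projections
  set P : (Fin t → ZMod 2) → Matrix (Fin n) (Fin n) ℍ :=
    fun w => ((2 : ℝ) ^ t)⁻¹ • ∑ v, sgn (ip w v) • A v with hPdef
  have hP : ∀ w, P w = ((2 : ℝ) ^ t)⁻¹ • ∑ v, sgn (ip w v) • A v := fun w => rfl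
  have htne : ((2 : ℝ) ^ t) ≠ 0 := by positivity
  -- A u * P w = sgn (ip w u) • P w
  have hAP : ∀ u w, A u * P w = sgn (ip w u) • P w := by
    intro u w
    have step : A u * (∑ v, sgn (ip w v) • A v)
        = sgn (ip w u) • ∑ v, sgn (ip w v) • A v := by
      rw [Finset.mul_sum, Finset.smul_sum]
      refine Fintype.sum_equiv (Equiv.addLeft u) _ _ ?_
      intro v
      show A u * (sgn (ip w v) • A v) = sgn (ip w u) • sgn (ip w (u + v)) • A (u + v)
      rw [mul_smul_comm, ← hA_add, smul_smul, ip_add, sgn_add, ← mul_assoc, sgn_mul_self,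
        one_mul]
    calc A u * P w = ((2:ℝ)^t)⁻¹ • (A u * ∑ v, sgn (ip w v) • A v) := by
          rw [hP, Matrix.mul_smul]
      _ = ((2:ℝ)^t)⁻¹ • (sgn (ip w u) • ∑ v, sgn (ip w v) • A v) := by rw [step]
      _ = sgn (ip w u) • P w := by
          rw [hP, smul_comm]
  -- P w is idempotent
  have hcard : Fintype.card (Fin t → ZMod 2) = 2 ^ t := by
    rw [Fintype.card_fun]
    simp [ZMod.card]
  have hPid : ∀ w, P w * P w = P w := by
    intro w
    calc P w * P w = ((2:ℝ)^t)⁻¹ • ∑ v, (sgn (ip w v) • A v) * P w := by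
          conv_lhs => rw [hP w]
          rw [Matrix.smul_mul, Finset.sum_mul]
      _ = ((2:ℝ)^t)⁻¹ • ∑ _v : Fin t → ZMod 2, P w := by
          congr 1
          refine Finset.sum_congr rfl fun v _ => ?_
          rw [Matrix.smul_mul, hAP, smul_smul, sgn_mul_self, one_smul]
      _ = P w := by
          rw [Finset.sum_const, Finset.card_univ, hcard, ← Nat.cast_smul_eq_nsmul ℝ, smul_smul]
          push_cast
          rw [inv_mul_cancel₀ htne, one_smul]
  -- P w is self-adjoint
  have hPsa : ∀ w, star (P w) = P w := by
    intro w
    rw [hP, star_real_smul_matrix, _root_.star_sum]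
    congr 1
    refine Finset.sum_congr rfl fun v _ => ?_
    rw [star_real_smul_matrix, hA_star]
  -- ∑ P w = 1
  have hPsum : ∑ w, P w = 1 := by
    have h1 : ∀ v : Fin t → ZMod 2, (∑ w : Fin t → ZMod 2, sgn (ip w v)) • A v
        = if v = 0 then ((2:ℝ)^t) • A v else 0 := by
      intro v
      rw [sum_sgn_ip]
      split_ifs with h
      · rfl
      · rw [zero_smul]
    calc ∑ w, P w = ((2:ℝ)^t)⁻¹ • ∑ w, ∑ v, sgn (ip w v) • A v := by
          rw [← Finset.smul_sum]
      _ = ((2:ℝ)^t)⁻¹ • ∑ v, (∑ w : Fin t → ZMod 2, sgn (ip w v)) • A v := by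
          rw [Finset.sum_comm]
          congr 1
          exact Finset.sum_congr rfl fun v _ => (Finset.sum_smul).symm
      _ = ((2:ℝ)^t)⁻¹ • ∑ v, (if v = 0 then ((2:ℝ)^t) • A v else 0) := by
          rw [Finset.sum_congr rfl fun v _ => h1 v]
      _ = ((2:ℝ)^t)⁻¹ • (((2:ℝ)^t) • A 0) := by
          congr 1
          refine Finset.sum_eq_single_of_mem 0 (Finset.mem_univ _) ?_ |>.trans (by rw [if_pos rfl])
          intro b _ hb
          rw [if_neg hb]
      _ = 1 := by
          rw [hA_zero, smul_smul, inv_mul_cancel₀ htne, one_smul]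
  -- decomposition of A u
  have hAdecomp : ∀ u, A u = ∑ w, sgn (ip w u) • P w := by
    intro u
    calc A u = A u * ∑ w, P w := by rw [hPsum, mul_one]
      _ = ∑ w, A u * P w := by rw [Finset.mul_sum]
      _ = ∑ w, sgn (ip w u) • P w := Finset.sum_congr rfl fun w _ => hAP u w
  -- counting
  have hcount : (Finset.univ.filter (fun w => P w ≠ 0)).card ≤ n :=
    card_nonzero_le P hPsa hPid hPsum _ (fun x hx => (Finset.mem_filter.1 hx).2)
  -- injectivity of the evaluation map
  have hΦ : Function.Injective
      (fun (u : Fin t → ZMod 2) => fun (w : {w : Fin t → ZMod 2 // P w ≠ 0}) => ip w.1 u) := by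
    intro u u' h
    apply hA_inj
    rw [hAdecomp u, hAdecomp u']
    refine Finset.sum_congr rfl fun w _ => ?_
    by_cases hw : P w = 0
    · rw [hw, smul_zero, smul_zero]
    · have := congrFun h (⟨w, hw⟩ : {w : Fin t → ZMod 2 // P w ≠ 0})
      simp only at this
      rw [this]
  have hcards := Fintype.card_le_of_injective _ hΦ
  rw [hcard, Fintype.card_fun] at hcards
  have hZ2 : Fintype.card (ZMod 2) = 2 := by simp [ZMod.card]
  rw [hZ2] at hcards
  have ht : t ≤ Fintype.card {w : Fin t → ZMod 2 // P w ≠ 0} :=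
    (Nat.pow_le_pow_iff_right (by norm_num)).1 hcards
  have hcs : Fintype.card {w : Fin t → ZMod 2 // P w ≠ 0}
      = (Finset.univ.filter (fun w => P w ≠ 0)).card := Fintype.card_subtype _
  omega

/-! ### The lower bound: diagonal ±1 matrices -/

/-- The nontrivial character of `Multiplicative (ZMod 2)` with values in `ℍ`. -/
def q (a : Multiplicative (ZMod 2)) : ℍ := (-1 : ℍ) ^ (Multiplicative.toAdd a).val

lemma q_mul (a b : Multiplicative (ZMod 2)) : q (a * b) = q a * q b := by
  unfold q
  rw [toAdd_mul, ZMod.val_add, neg_one_pow_mod_two, pow_add]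

lemma q_one : q 1 = 1 := by
  unfold q
  rw [toAdd_one, ZMod.val_zero, pow_zero]

lemma q_cases (a : Multiplicative (ZMod 2)) : q a = 1 ∨ q a = -1 := by
  unfold q
  have := ZMod.val_lt (Multiplicative.toAdd a)
  interval_cases h : (Multiplicative.toAdd a).val
  · left; rw [pow_zero]
  · right; rw [pow_one]

lemma q_sq (a : Multiplicative (ZMod 2)) : q a * q a = 1 := by
  rcases q_cases a with h | h <;> rw [h] <;> simp

lemma q_star (a : Multiplicative (ZMod 2)) : star (q a) = q a := by
  rcases q_cases a with h | h <;> rw [h] <;> simp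

lemma one_ne_neg_one_H : (1 : ℍ) ≠ -1 := by
  intro h
  have := congrArg QuaternionAlgebra.re h
  simp [Quaternion.re_neg, Quaternion.re_one] at this
  norm_num at this

lemma q_inj : Function.Injective q := by
  intro a b h
  have hcase : ∀ x : Multiplicative (ZMod 2),
      x = Multiplicative.ofAdd 0 ∨ x = Multiplicative.ofAdd 1 := by decide
  have h0 : q (Multiplicative.ofAdd (0 : ZMod 2)) = 1 := by
    unfold q; rw [toAdd_ofAdd, ZMod.val_zero, pow_zero]
  have h1 : q (Multiplicative.ofAdd (1 : ZMod 2)) = -1 := by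
    unfold q; rw [toAdd_ofAdd, ZMod.val_one, pow_one]
  rcases hcase a with ha | ha <;> rcases hcase b with hb | hb <;> subst ha <;> subst hb
  · rfl
  · rw [h0, h1] at h; exact absurd h one_ne_neg_one_H
  · rw [h0, h1] at h; exact absurd h.symm one_ne_neg_one_H
  · rfl

lemma lower_bound (n : ℕ) :
    ∃ f : (Fin n → Multiplicative (ZMod 2)) →* unitary (Matrix (Fin n) (Fin n) ℍ),
      Function.Injective f := by
  have hmem : ∀ g : Fin n → Multiplicative (ZMod 2),
      Matrix.diagonal (fun i => q (g i)) ∈ unitary (Matrix (Fin n) (Fin n) ℍ) := by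
    intro g
    rw [Unitary.mem_iff]
    constructor
    · rw [Matrix.star_eq_conjTranspose, Matrix.diagonal_conjTranspose,
        Matrix.diagonal_mul_diagonal]
      have h : (fun i => (star fun j => q (g j)) i * q (g i)) = fun _ => (1 : ℍ) := by
        funext i
        simp only [Pi.star_apply]
        rw [q_star, q_sq]
      rw [h, Matrix.diagonal_one]
    · rw [Matrix.star_eq_conjTranspose, Matrix.diagonal_conjTranspose,
        Matrix.diagonal_mul_diagonal]
      have h : (fun i => q (g i) * (star fun j => q (g j)) i) = fun _ => (1 : ℍ) := by
        funext i
        simp only [Pi.star_apply]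
        rw [q_star, q_sq]
      rw [h, Matrix.diagonal_one]
  refine ⟨{ toFun := fun g => ⟨Matrix.diagonal (fun i => q (g i)), hmem g⟩,
            map_one' := ?_, map_mul' := ?_ }, ?_⟩
  · apply Subtype.ext
    show Matrix.diagonal (fun i => q ((1 : Fin n → Multiplicative (ZMod 2)) i)) = 1
    have h : (fun i => q ((1 : Fin n → Multiplicative (ZMod 2)) i)) = fun _ => (1 : ℍ) := by
      funext i
      exact q_one
    rw [h, Matrix.diagonal_one]
  · intro g g'
    apply Subtype.ext
    show Matrix.diagonal (fun i => q ((g * g') i))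
      = Matrix.diagonal (fun i => q (g i)) * Matrix.diagonal (fun i => q (g' i))
    rw [Matrix.diagonal_mul_diagonal]
    have h2 : (fun i => q ((g * g') i)) = fun i => q (g i) * q (g' i) :=
      funext fun i => q_mul (g i) (g' i)
    rw [h2]
  · intro g g' h
    have h1 : Matrix.diagonal (fun i => q (g i)) = Matrix.diagonal (fun i => q (g' i)) :=
      congrArg Subtype.val h
    funext i
    apply q_inj
    have := congrFun (congrFun h1 i) i
    simpa [Matrix.diagonal_apply_eq] using this

end TwoRankSp

end

/-- The set of ranks of elementary abelian 2-subgroups of `G`. -/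
def rank2Set (G : Type*) [Group G] : Set ℕ :=
  {t | ∃ f : (Fin t → Multiplicative (ZMod 2)) →* G, Function.Injective f}

/-- The 2-rank of the compact symplectic group `Sp(n)`, realized as the group of
unitary `n × n` quaternionic matrices, is `n`. -/
theorem twoRank_compactSymplecticGroup (n : ℕ) :
    IsGreatest (rank2Set (unitary (Matrix (Fin n) (Fin n) (Quaternion ℝ)))) n := by
  constructor
  · exact TwoRankSp.lower_bound n
  · intro t ht
    obtain ⟨f, hf⟩ := ht
    exact TwoRankSp.upper_bound f hf
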